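/- Let p ∈ (0,1], let ε ∈ [0, 1/4), let ℓ ≥ 2 be a natural number, and let ε₁, ε_{ℓ−1}, ε_ℓ be real numbers with |ε₁| ≤ ε, |ε_{ℓ−1}| ≤ ε, and |ε_ℓ| ≤ ε. Suppose that p^(2^ℓ) + ε_ℓ ≤ (1 + ε₁)/3 and that p^(2^(ℓ−1)) + ε_{ℓ−1} > (1 + ε₁)/3. Then, setting m = 2^ℓ, one has (1 − 4ε)²/9 < p^m ≤ (1 + 4ε)/3. -/
import Mathlib

/-- Algebraic core of Lemma 2 (exit/non-exit conditions of the while loop):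
if the algorithm exits at round `ℓ` (i.e. `p^(2^ℓ) + ε_ℓ ≤ (1 + ε₁)/3`) but did not
exit at round `ℓ - 1` (i.e. `p^(2^(ℓ-1)) + ε_{ℓ-1} > (1 + ε₁)/3`), and all estimation
errors are bounded by `ε < 1/4`, then `(1 - 4ε)²/9 < p^m ≤ (1 + 4ε)/3` for `m = 2^ℓ`. -/
theorem stmt_1 (p ε : ℝ) (hp0 : 0 < p) (hp1 : p ≤ 1)
    (hε0 : 0 ≤ ε) (hε : ε < 1 / 4)
    (ℓ : ℕ) (hℓ : 2 ≤ ℓ)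
    (ε₁ εℓ₁ εℓ : ℝ) (h₁ : |ε₁| ≤ ε) (hℓ₁ : |εℓ₁| ≤ ε) (hℓ' : |εℓ| ≤ ε)
    (hexit : p ^ (2 ^ ℓ) + εℓ ≤ (1 + ε₁) / 3)
    (hnoexit : (1 + ε₁) / 3 < p ^ (2 ^ (ℓ - 1)) + εℓ₁) :
    (1 - 4 * ε) ^ 2 / 9 < p ^ (2 ^ ℓ) ∧ p ^ (2 ^ ℓ) ≤ (1 + 4 * ε) / 3 := by
  obtain ⟨h₁a, h₁b⟩ := abs_le.mp h₁
  obtain ⟨h₂a, h₂b⟩ := abs_le.mp hℓ₁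
  obtain ⟨h₃a, h₃b⟩ := abs_le.mp hℓ'
  constructor
  · have hlow : (1 - 4 * ε) / 3 < p ^ (2 ^ (ℓ - 1)) := by linarith
    have hpow : p ^ (2 ^ ℓ) = (p ^ (2 ^ (ℓ - 1))) ^ 2 := by
      rw [← pow_mul]
      congr 1
      rw [← pow_succ]
      congr 1
      omega
    rw [hpow]
    have h0 : (0:ℝ) ≤ (1 - 4 * ε) / 3 := by linarith
    calc (1 - 4 * ε) ^ 2 / 9 = ((1 - 4 * ε) / 3) ^ 2 := by ring
      _ < (p ^ (2 ^ (ℓ - 1))) ^ 2 := by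
          apply pow_lt_pow_left₀ hlow h0 (by norm_num)
  · linarith
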